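/- Let m ∈ (0,1], let φ, γ ∈ ℝ with φ ≥ m, and set a = γ/φ. Let F and G be square-integrable real random variables on a probability space (Ω, 𝓕, P), and define Â = (G/F) · 1_{F > m/2}. Then E(|Â − a|²) ≤ (8/m²) E(|G − γ|²) + ( 8γ²/m⁴ + 9γ²/(φ² m²) ) E(|F − φ|²). -/

import Mathlib

open MeasureTheory

lemma ptwise (m φ γ g u : ℝ) (hm0 : 0 < m) (hφ : m ≤ φ) (hu : m/2 < u) :
    (g/u - γ/φ)^2 ≤ 8/m^2*(g-γ)^2 + (8*γ^2/m^4 + 9*γ^2/(φ^2*m^2))*(u-φ)^2 := by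
  have hu0 : (0:ℝ) < u := lt_trans (by positivity) hu
  have hφ0 : (0:ℝ) < φ := lt_of_lt_of_le hm0 hφ
  have hmu : m^2 ≤ 4*u^2 := by nlinarith
  have e : g/u - γ/φ = (g-γ)/u + γ*(φ-u)/(u*φ) := by field_simp; ring
  rw [e]
  have hsum : ((g-γ)/u + γ*(φ-u)/(u*φ))^2 ≤ 2*((g-γ)/u)^2 + 2*(γ*(φ-u)/(u*φ))^2 := by
    nlinarith [sq_nonneg ((g-γ)/u - γ*(φ-u)/(u*φ))]
  have hA : ((g-γ)/u)^2 ≤ 4/m^2*(g-γ)^2 := by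
    rw [div_pow, div_le_iff₀ (by positivity), div_mul_eq_mul_div, div_mul_eq_mul_div,
      le_div_iff₀ (by positivity)]
    nlinarith [mul_le_mul_of_nonneg_left hmu (sq_nonneg (g-γ))]
  have hB : (γ*(φ-u)/(u*φ))^2 ≤ 4*γ^2/(m^2*φ^2)*(u-φ)^2 := by
    rw [div_pow, div_le_iff₀ (by positivity), div_mul_eq_mul_div, div_mul_eq_mul_div,
      le_div_iff₀ (by positivity)]
    nlinarith [mul_le_mul_of_nonneg_left hmu (by positivity : (0:ℝ) ≤ γ^2*(u-φ)^2*φ^2)]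
  have hC : 8*γ^2/(m^2*φ^2)*(u-φ)^2 ≤ (8*γ^2/m^4 + 9*γ^2/(φ^2*m^2))*(u-φ)^2 := by
    apply mul_le_mul_of_nonneg_right _ (sq_nonneg _)
    have h1 : 8*γ^2/(m^2*φ^2) ≤ 9*γ^2/(φ^2*m^2) := by
      rw [mul_comm (m^2)]
      gcongr
      norm_num
    have h0 : (0:ℝ) ≤ 8*γ^2/m^4 := by positivity
    linarith
  calc ((g-γ)/u + γ*(φ-u)/(u*φ))^2 ≤ 2*((g-γ)/u)^2 + 2*(γ*(φ-u)/(u*φ))^2 := hsum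
    _ ≤ 2*(4/m^2*(g-γ)^2) + 2*(4*γ^2/(m^2*φ^2)*(u-φ)^2) := by
        exact add_le_add (by linarith) (by linarith)
    _ = 8/m^2*(g-γ)^2 + 8*γ^2/(m^2*φ^2)*(u-φ)^2 := by ring
    _ ≤ 8/m^2*(g-γ)^2 + (8*γ^2/m^4 + 9*γ^2/(φ^2*m^2))*(u-φ)^2 := by linarith

lemma ptwise2 (m φ γ g u : ℝ) (hm0 : 0 < m) (hφ : m ≤ φ) (hu : ¬ m/2 < u) :
    (0 - γ/φ)^2 ≤ 8/m^2*(g-γ)^2 + (8*γ^2/m^4 + 9*γ^2/(φ^2*m^2))*(u-φ)^2 := by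
  have hφ0 : (0:ℝ) < φ := lt_of_lt_of_le hm0 hφ
  push_neg at hu
  have h1 : m^2/4 ≤ (u-φ)^2 := by nlinarith
  have h2 : 9*γ^2/(φ^2*m^2)*(m^2/4) ≤ 9*γ^2/(φ^2*m^2)*(u-φ)^2 :=
    mul_le_mul_of_nonneg_left h1 (by positivity)
  have h3 : 9*γ^2/(φ^2*m^2)*(m^2/4) = 9/4*(γ^2/φ^2) := by field_simp
  have h4 : (0 - γ/φ)^2 = γ^2/φ^2 := by rw [zero_sub, neg_sq, div_pow]
  have h5 : (0:ℝ) ≤ 8/m^2*(g-γ)^2 := by positivity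
  have h6 : (0:ℝ) ≤ 8*γ^2/m^4*(u-φ)^2 := by positivity
  have h7 : (0:ℝ) ≤ γ^2/φ^2 := by positivity
  nlinarith [h2]

/-- The ratio-estimator bound: if `Â = (G/F) 1_{F > m/2}` estimates `a = γ/φ` with
`φ ≥ m`, then `E(|Â - a|²) ≤ (8/m²) E(|G - γ|²) + (8γ²/m⁴ + 9γ²/(φ²m²)) E(|F - φ|²)`. -/
theorem stmt15 (m φ γ : ℝ) (hm0 : 0 < m) (hm1 : m ≤ 1) (hφ : m ≤ φ)
    (Ω : Type) [MeasurableSpace Ω] (P : Measure Ω) [IsProbabilityMeasure P]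
    (F G : Ω → ℝ) (hF : MemLp F 2 P) (hG : MemLp G 2 P) :
    (∫ ω, |Set.indicator {ω' : Ω | m / 2 < F ω'} (fun ω' => G ω' / F ω') ω - γ / φ| ^ 2 ∂P) ≤
      (8 / m ^ 2) * (∫ ω, |G ω - γ| ^ 2 ∂P) +
        (8 * γ ^ 2 / m ^ 4 + 9 * γ ^ 2 / (φ ^ 2 * m ^ 2)) * ∫ ω, |F ω - φ| ^ 2 ∂P := by
  have hGint : Integrable (fun ω => |G ω - γ| ^ 2) P := by
    simpa [sq_abs] using (hG.sub (memLp_const γ)).integrable_sq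
  have hFint : Integrable (fun ω => |F ω - φ| ^ 2) P := by
    simpa [sq_abs] using (hF.sub (memLp_const φ)).integrable_sq
  have key : ∀ ω, |Set.indicator {ω' : Ω | m / 2 < F ω'} (fun ω' => G ω' / F ω') ω - γ / φ| ^ 2 ≤
      8 / m ^ 2 * |G ω - γ| ^ 2 +
        (8 * γ ^ 2 / m ^ 4 + 9 * γ ^ 2 / (φ ^ 2 * m ^ 2)) * |F ω - φ| ^ 2 := by
    intro ω
    rw [sq_abs, sq_abs, sq_abs]
    by_cases h : m / 2 < F ω
    · rw [Set.indicator_of_mem (by exact h)]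
      exact ptwise m φ γ (G ω) (F ω) hm0 hφ h
    · rw [Set.indicator_of_notMem (by exact h)]
      exact ptwise2 m φ γ (G ω) (F ω) hm0 hφ h
  calc (∫ ω, |Set.indicator {ω' : Ω | m / 2 < F ω'} (fun ω' => G ω' / F ω') ω - γ / φ| ^ 2 ∂P)
      ≤ ∫ ω, (8 / m ^ 2 * |G ω - γ| ^ 2 +
          (8 * γ ^ 2 / m ^ 4 + 9 * γ ^ 2 / (φ ^ 2 * m ^ 2)) * |F ω - φ| ^ 2) ∂P := by
        apply integral_mono_of_nonneg
        · exact ae_of_all _ fun ω => by positivity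
        · exact (hGint.const_mul _).add (hFint.const_mul _)
        · exact ae_of_all _ key
    _ = (8 / m ^ 2) * (∫ ω, |G ω - γ| ^ 2 ∂P) +
        (8 * γ ^ 2 / m ^ 4 + 9 * γ ^ 2 / (φ ^ 2 * m ^ 2)) * ∫ ω, |F ω - φ| ^ 2 ∂P := by
        rw [integral_add (hGint.const_mul _) (hFint.const_mul _),
          integral_const_mul, integral_const_mul]
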